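/- arXiv:2002.03626 — 4 statements merged into one kernel-verified Lean document; each statement's English description precedes it below -/
import Mathlib

section
/- Let F ⊆ R⟨X⟩ be a set of polynomials such that for every g ∈ F there exists m_g ∈ supp(g) with σ(m_g) ⊆ σ(g). Let f ∈ R⟨X⟩ be compatible with Q and suppose there exist scalars λ_1,…,λ_n ∈ R, elements g_1,…,g_n ∈ F, and monomials a_1,b_1,…,a_n,b_n ∈ ⟨X⟩ such that f = Σ_{i=1}^n λ_i·a_i·g_i·b_i and σ(f) ⊆ σ(a_i·m_{g_i}·b_i) for each i. Then f is a Q-consequence of F. -/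
open scoped BigOperators

universe u₁ u₂ u₃ u₄ u₅

/-- A labelled quiver: a directed multigraph with edges labelled in `X`. -/
structure LQuiver (V : Type u₁) (E : Type u₂) (X : Type u₃) where
  src : E → V
  tgt : E → V
  lab : E → X

namespace LQuiver

variable {V : Type u₁} {E : Type u₂} {X : Type u₃}

/-- Paths in the quiver (possibly empty). -/
inductive Walk (Q : LQuiver V E X) : V → V → Type (max u₁ u₂)
  | nil (v : V) : Walk Q v v
  | cons {u : V} (e : E) (p : Walk Q u (Q.src e)) : Walk Q u (Q.tgt e)

/-- The label of a path, a word in the free monoid `⟨X⟩`. -/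
def wlabel (Q : LQuiver V E X) : ∀ {u v : V}, Q.Walk u v → FreeMonoid X
  | _, _, .nil _ => 1
  | _, _, .cons e p => FreeMonoid.of (Q.lab e) * Q.wlabel p

/-- The signature `σ(m)` of a monomial (word) `m`. -/
def sigW (Q : LQuiver V E X) (m : FreeMonoid X) : Set (V × V) :=
  {p : V × V | ∃ w : Q.Walk p.1 p.2, Q.wlabel w = m}

variable {R : Type u₄} [CommRing R]

/-- The signature `σ(f)` of a noncommutative polynomial `f ∈ R⟨X⟩`. -/
def sig (Q : LQuiver V E X) (f : MonoidAlgebra R (FreeMonoid X)) : Set (V × V) :=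
  ⋂ m ∈ f.coeff.support, Q.sigW m

/-- A polynomial is compatible with `Q` if its signature is nonempty. -/
def Compatible (Q : LQuiver V E X) (f : MonoidAlgebra R (FreeMonoid X)) : Prop :=
  (Q.sig f).Nonempty

/-- The projection `s(f)` of `σ(f)` on sources. -/
def srcSet (Q : LQuiver V E X) (f : MonoidAlgebra R (FreeMonoid X)) : Set V :=
  Prod.fst '' Q.sig f

/-- The projection `t(f)` of `σ(f)` on targets. -/
def tgtSet (Q : LQuiver V E X) (f : MonoidAlgebra R (FreeMonoid X)) : Set V :=
  Prod.snd '' Q.sig f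

/-- `f` is a `Q`-consequence of `F`. -/
def QConsequence (Q : LQuiver V E X) (F : Set (MonoidAlgebra R (FreeMonoid X)))
    (f : MonoidAlgebra R (FreeMonoid X)) : Prop :=
  Q.Compatible f ∧
  ∃ (n : ℕ) (g a b : Fin n → MonoidAlgebra R (FreeMonoid X)),
    (∀ i, g i ∈ F) ∧
    f = ∑ i, a i * g i * b i ∧
    ∀ uv ∈ Q.sig f, ∀ i, ∃ ui vi : V,
      (uv.1, ui) ∈ Q.sig (b i) ∧ (ui, vi) ∈ Q.sig (g i) ∧ (vi, uv.2) ∈ Q.sig (a i)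

end LQuiver

/-- The monomial `m` regarded as a polynomial in `R⟨X⟩`. -/
noncomputable def mono (R : Type u₄) [CommRing R] {X : Type u₃} (m : FreeMonoid X) :
    MonoidAlgebra R (FreeMonoid X) :=
  MonoidAlgebra.single m 1

/-- One rewriting step with divisor monomials selected by `DM`. -/
def RewriteStep {R : Type u₄} [CommRing R] {X : Type u₃}
    (G : Set (MonoidAlgebra R (FreeMonoid X)))
    (DM : MonoidAlgebra R (FreeMonoid X) → Set (FreeMonoid X))
    (f h : MonoidAlgebra R (FreeMonoid X)) : Prop :=
  ∃ g ∈ G, ∃ m ∈ DM g, ∃ a b : FreeMonoid X, ∃ lam : R,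
    a * m * b ∈ f.coeff.support ∧ h = f + lam • (mono R a * g * mono R b)

/-- A monomial order: a well-founded linear order compatible with multiplication. -/
def IsMonomialOrder {X : Type u₃} (ord : LinearOrder (FreeMonoid X)) : Prop :=
  WellFounded ord.lt ∧
    ∀ a b m m' : FreeMonoid X, ord.le m m' → ord.le (a * m * b) (a * m' * b)

/-- The leading monomial of a polynomial w.r.t. a linear order on monomials
(defined as `1` for the zero polynomial). -/
noncomputable def LM {K : Type u₄} [CommRing K] {X : Type u₃}
    (ord : LinearOrder (FreeMonoid X)) (f : MonoidAlgebra K (FreeMonoid X)) : FreeMonoid X :=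
  letI := ord
  letI : Decidable (f = 0) := Classical.dec _
  if h : f = 0 then 1 else f.coeff.support.max' (Finsupp.support_nonempty_iff.mpr (mt MonoidAlgebra.coeff_eq_zero.mp h))

/-- One step of standard polynomial reduction w.r.t. a set `G` and a monomial order. -/
def ReduceStep {K : Type u₄} [Field K] {X : Type u₃} (ord : LinearOrder (FreeMonoid X))
    (G : Set (MonoidAlgebra K (FreeMonoid X)))
    (f h : MonoidAlgebra K (FreeMonoid X)) : Prop :=
  ∃ g ∈ G, g ≠ 0 ∧ ∃ a b : FreeMonoid X,
    a * LM ord g * b ∈ f.coeff.support ∧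
    h = f - (f.coeff (a * LM ord g * b) / g.coeff (LM ord g)) • (mono K a * g * mono K b)

/-- `f` is `Q`-order compatible w.r.t. the order `ord`. -/
def QOrderCompatible {V : Type u₁} {E : Type u₂} {X : Type u₃} {K : Type u₄} [CommRing K]
    (Q : LQuiver V E X) (ord : LinearOrder (FreeMonoid X))
    (f : MonoidAlgebra K (FreeMonoid X)) : Prop :=
  Q.Compatible f ∧ Q.sigW (LM ord f) = Q.sig f

/-- A representation of a labelled quiver. -/
structure QRep (R : Type u₄) [CommRing R] {V : Type u₁} {E : Type u₂} {X : Type u₃}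
    (Q : LQuiver V E X) where
  M : V → Type u₅
  [addcg : ∀ v, AddCommGroup (M v)]
  [mod : ∀ v, Module R (M v)]
  φ : (e : E) → M (Q.src e) →ₗ[R] M (Q.tgt e)

attribute [instance] QRep.addcg QRep.mod

namespace QRep

variable {R : Type u₄} [CommRing R] {V : Type u₁} {E : Type u₂} {X : Type u₃}
  {Q : LQuiver V E X}

/-- The linear map induced by a path. -/
def walkMap (ρ : QRep R Q) : ∀ {u v : V}, Q.Walk u v → (ρ.M u →ₗ[R] ρ.M v)
  | _, _, .nil _ => LinearMap.id
  | _, _, .cons e p => (ρ.φ e).comp (ρ.walkMap p)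

/-- The representation is consistent with the labelling: two paths with the same
source, target and label induce the same linear map. -/
def Consistent (ρ : QRep R Q) : Prop :=
  ∀ (u v : V) (p q : Q.Walk u v), Q.wlabel p = Q.wlabel q → ρ.walkMap p = ρ.walkMap q

/-- The realization `φ_{v,w}(f)` of a polynomial `f` (for a consistent representation and
`(v,w) ∈ σ(f)`, this is the well-defined linear map of the paper). -/
noncomputable def real (ρ : QRep R Q) (v w : V) (f : MonoidAlgebra R (FreeMonoid X)) :
    ρ.M v →ₗ[R] ρ.M w :=
  ∑ m ∈ f.coeff.support, f.coeff m •
    (letI : Decidable (∃ p : Q.Walk v w, Q.wlabel p = m) := Classical.dec _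
     if h : ∃ p : Q.Walk v w, Q.wlabel p = m then ρ.walkMap h.choose else 0)

end QRep

section Aux

variable {V : Type u₁} {E : Type u₂} {X : Type u₃}

/-- Splitting a walk whose label factors as a product of two words. -/
theorem LQuiver.walk_split (Q : LQuiver V E X) {u v : V} (w : Q.Walk u v) :
    ∀ x y : FreeMonoid X, Q.wlabel w = x * y →
    ∃ z, ∃ w1 : Q.Walk z v, ∃ w2 : Q.Walk u z, Q.wlabel w1 = x ∧ Q.wlabel w2 = y := by
  induction w with
  | nil =>
    intro x y h
    have hx : x = 1 ∧ y = 1 := by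
      have : x.toList ++ y.toList = [] := by
        rw [← FreeMonoid.toList_mul, ← h, LQuiver.wlabel, FreeMonoid.toList_one]
      rcases List.append_eq_nil_iff.mp this with ⟨hx, hy⟩
      exact ⟨FreeMonoid.toList.injective (by simpa using hx),
        FreeMonoid.toList.injective (by simpa using hy)⟩
    exact ⟨_, .nil _, .nil _, by simp [LQuiver.wlabel, hx.1], by simp [LQuiver.wlabel, hx.2]⟩
  | cons e p ih =>
    intro x y h
    have hlist : Q.lab e :: (Q.wlabel p).toList = x.toList ++ y.toList := by
      simpa [LQuiver.wlabel] using congrArg FreeMonoid.toList h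
    rcases hx : x.toList with _ | ⟨c, x'⟩
    · have hx1 : x = 1 := FreeMonoid.toList.injective (by simpa using hx)
      refine ⟨_, .nil _, .cons e p, by simp [LQuiver.wlabel, hx1], ?_⟩
      simpa [hx1] using h
    · rw [hx] at hlist
      have hce : Q.lab e = c ∧ (Q.wlabel p).toList = x' ++ y.toList := by
        simpa using hlist
      have hc := hce.1
      have hp : Q.wlabel p = FreeMonoid.ofList x' * y := by
        apply FreeMonoid.toList.injective
        simpa using hce.2
      obtain ⟨z, w1, w2, h1, h2⟩ := ih (FreeMonoid.ofList x') y hp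
      refine ⟨z, .cons e w1, w2, ?_, h2⟩
      apply FreeMonoid.toList.injective
      simp [LQuiver.wlabel, h1, hc, hx]

/-- Signature of a monomial is contained in the signature of any polynomial
whose support is contained in `{m}`. -/
theorem LQuiver.sigW_subset_sig_single {R : Type u₄} [CommRing R] (Q : LQuiver V E X)
    (m : FreeMonoid X) (r : R) :
    Q.sigW m ⊆ Q.sig (MonoidAlgebra.single m r : MonoidAlgebra R (FreeMonoid X)) := by
  intro p hp
  show p ∈ ⋂ m' ∈ (MonoidAlgebra.single m r : MonoidAlgebra R (FreeMonoid X)).coeff.support, Q.sigW m'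
  refine Set.mem_iInter₂.mpr fun m' hm' => ?_
  have : m' = m := by
    have := Finsupp.support_single_subset hm'
    simpa using this
  rwa [this]

end Aux

/-- criterion for `Q`-consequences. -/
theorem qConsequence_criterion {V E X R : Type*} [CommRing R] (Q : LQuiver V E X)
    (F : Set (MonoidAlgebra R (FreeMonoid X)))
    (mg : MonoidAlgebra R (FreeMonoid X) → FreeMonoid X)
    (hF : ∀ g ∈ F, mg g ∈ g.coeff.support ∧ Q.sigW (mg g) ⊆ Q.sig g)
    (f : MonoidAlgebra R (FreeMonoid X)) (hf : Q.Compatible f)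
    (n : ℕ) (lam : Fin n → R) (g : Fin n → MonoidAlgebra R (FreeMonoid X))
    (a b : Fin n → FreeMonoid X)
    (hgF : ∀ i, g i ∈ F)
    (hrep : f = ∑ i, lam i • (mono R (a i) * g i * mono R (b i)))
    (hsig : ∀ i, Q.sig f ⊆ Q.sigW (a i * mg (g i) * b i)) :
    Q.QConsequence F f := by
  refine ⟨hf, n, g, fun i => lam i • mono R (a i), fun i => mono R (b i), hgF, ?_, ?_⟩
  · rw [hrep]
    exact Finset.sum_congr rfl fun i _ => by rw [smul_mul_assoc, smul_mul_assoc]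
  · intro uv huv i
    have hmem : uv ∈ Q.sigW (a i * mg (g i) * b i) := hsig i huv
    obtain ⟨w, hw⟩ := hmem
    obtain ⟨ui, w1, w2, h1, h2⟩ := Q.walk_split w (a i * mg (g i)) (b i) (by rw [hw, mul_assoc])
    obtain ⟨vi, w1a, w1b, h1a, h1b⟩ := Q.walk_split w1 (a i) (mg (g i)) h1
    refine ⟨ui, vi, ?_, ?_, ?_⟩
    · exact Q.sigW_subset_sig_single (b i) (1 : R) ⟨w2, h2⟩
    · exact (hF (g i) (hgF i)).2 ⟨w1b, h1b⟩
    · have : lam i • mono R (a i) = MonoidAlgebra.single (a i) (lam i) := by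
        simp [mono, MonoidAlgebra.smul_single']
      show (vi, uv.2) ∈ Q.sig (lam i • mono R (a i))
      rw [this]
      exact Q.sigW_subset_sig_single (a i) (lam i) ⟨w1a, h1a⟩
end

section
/- Let F, G ⊆ R⟨X⟩ be sets of polynomials such that each element of G is a Q-consequence of F. Then any Q-consequence of G is also a Q-consequence of F. -/
open scoped BigOperators

universe u₁ u₂ u₃ u₄ u₅

namespace LQuiver

variable {V : Type u₁} {E : Type u₂} {X : Type u₃}

/-- Composition of walks. -/
def Walk.comp {Q : LQuiver V E X} {u v : V} (p : Q.Walk u v) :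
    ∀ {w : V}, Q.Walk v w → Q.Walk u w
  | _, .nil _ => p
  | _, .cons e q => .cons e (p.comp q)

lemma wlabel_comp {Q : LQuiver V E X} {u v : V} (p : Q.Walk u v) :
    ∀ {w : V} (q : Q.Walk v w), Q.wlabel (p.comp q) = Q.wlabel q * Q.wlabel p
  | _, .nil _ => by simp [Walk.comp, wlabel]
  | _, .cons e q => by
      simp [Walk.comp, wlabel, wlabel_comp p q, mul_assoc]

lemma sigW_mul {Q : LQuiver V E X} {m₁ m₂ : FreeMonoid X} {u v w : V}
    (h₂ : (u, v) ∈ Q.sigW m₂) (h₁ : (v, w) ∈ Q.sigW m₁) :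
    (u, w) ∈ Q.sigW (m₁ * m₂) := by
  obtain ⟨p, hp⟩ := h₂
  obtain ⟨q, hq⟩ := h₁
  exact ⟨p.comp q, by rw [wlabel_comp, hp, hq]⟩

variable {R : Type u₄} [CommRing R]

lemma sig_mul {Q : LQuiver V E X} {p q : MonoidAlgebra R (FreeMonoid X)} {u v w : V}
    (hq : (u, v) ∈ Q.sig q) (hp : (v, w) ∈ Q.sig p) :
    (u, w) ∈ Q.sig (p * q) := by
  classical
  rw [sig, Set.mem_iInter₂]
  intro m hm
  have := MonoidAlgebra.support_coeff_mul_subset p q hm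
  rw [Finset.mem_mul] at this
  obtain ⟨m₁, hm₁, m₂, hm₂, rfl⟩ := this
  rw [sig, Set.mem_iInter₂] at hq hp
  exact sigW_mul (hq m₂ hm₂) (hp m₁ hm₁)

end LQuiver

/-- transitivity of `Q`-consequences. -/
theorem qConsequence_trans {V E X R : Type*} [CommRing R] (Q : LQuiver V E X)
    (F G : Set (MonoidAlgebra R (FreeMonoid X)))
    (hG : ∀ g ∈ G, Q.QConsequence F g)
    (h : MonoidAlgebra R (FreeMonoid X)) (hh : Q.QConsequence G h) :
    Q.QConsequence F h := by
  obtain ⟨hcomp, n, g, a, b, hgG, hsum, hsig⟩ := hh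
  have H : ∀ i : Fin n, Q.QConsequence F (g i) := fun i => hG (g i) (hgG i)
  choose n' g' a' b' hF heq hsig' using fun i => (H i).2
  classical
  let e : (Σ i : Fin n, Fin (n' i)) ≃ Fin (Fintype.card (Σ i : Fin n, Fin (n' i))) :=
    Fintype.equivFin _
  refine ⟨hcomp, Fintype.card (Σ i : Fin n, Fin (n' i)),
    fun k => g' (e.symm k).1 (e.symm k).2,
    fun k => a (e.symm k).1 * a' (e.symm k).1 (e.symm k).2,
    fun k => b' (e.symm k).1 (e.symm k).2 * b (e.symm k).1,
    fun k => hF _ _, ?_, ?_⟩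
  · rw [hsum]
    rw [Fintype.sum_equiv e.symm _
      (fun s : Σ i : Fin n, Fin (n' i) =>
        (a s.1 * a' s.1 s.2) * g' s.1 s.2 * (b' s.1 s.2 * b s.1)) (fun k => rfl)]
    rw [← Finset.univ_sigma_univ, Finset.sum_sigma]
    refine Finset.sum_congr rfl fun i _ => ?_
    rw [heq i, Finset.mul_sum, Finset.sum_mul]
    refine Finset.sum_congr rfl fun j _ => by simp only [mul_assoc]
  · intro uv huv k
    obtain ⟨ui, vi, hb, hg, ha⟩ := hsig uv huv (e.symm k).1
    obtain ⟨u', v', hb', hg', ha'⟩ := hsig' (e.symm k).1 (ui, vi) hg (e.symm k).2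
    exact ⟨u', v', LQuiver.sig_mul hb hb', hg', LQuiver.sig_mul ha' ha⟩
end

section
/- Let F ⊆ R⟨X⟩ be a set of polynomials and Q a labelled quiver with labels in X. If a polynomial f ∈ R⟨X⟩ is a Q-consequence of F, then for every representation of Q consistent with its labelling in which all realizations of all elements of F are the zero map, all realizations of f are the zero map (i.e., φ_{u,v}(f) = 0 for every (u,v) ∈ σ(f)). -/
open scoped BigOperators

universe u₁ u₂ u₃ u₄ u₅

section Aux

variable {V : Type u₁} {E : Type u₂} {X : Type u₃}

/-- Composition (concatenation) of walks. -/
def LQuiver.Walk.wcomp {Q : LQuiver V E X} :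
    ∀ {u v w : V}, Q.Walk v w → Q.Walk u v → Q.Walk u w
  | _, _, _, .nil _, q => q
  | _, _, _, .cons e p, q => .cons e (p.wcomp q)

lemma LQuiver.wlabel_wcomp {Q : LQuiver V E X} {u v w : V}
    (p : Q.Walk v w) (q : Q.Walk u v) :
    Q.wlabel (p.wcomp q) = Q.wlabel p * Q.wlabel q := by
  induction p with
  | nil => simp [LQuiver.Walk.wcomp, LQuiver.wlabel]
  | cons e p ih => simp [LQuiver.Walk.wcomp, LQuiver.wlabel, ih, mul_assoc]

variable {R : Type u₄} [CommRing R] {Q : LQuiver V E X}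

lemma QRep.walkMap_wcomp (ρ : QRep R Q) {u v w : V}
    (p : Q.Walk v w) (q : Q.Walk u v) :
    ρ.walkMap (p.wcomp q) = (ρ.walkMap p).comp (ρ.walkMap q) := by
  induction p with
  | nil => simp [LQuiver.Walk.wcomp, QRep.walkMap]
  | cons e p ih =>
      simp only [LQuiver.Walk.wcomp, QRep.walkMap, ih, LinearMap.comp_assoc]

/-- The linear map associated to a single monomial. -/
noncomputable def QRep.Phi (ρ : QRep R Q) (v w : V) (m : FreeMonoid X) :
    ρ.M v →ₗ[R] ρ.M w :=
  letI : Decidable (∃ p : Q.Walk v w, Q.wlabel p = m) := Classical.dec _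
  if h : ∃ p : Q.Walk v w, Q.wlabel p = m then ρ.walkMap h.choose else 0

lemma QRep.real_eq (ρ : QRep R Q) (v w : V) (f : MonoidAlgebra R (FreeMonoid X)) :
    ρ.real v w f = ∑ m ∈ f.coeff.support, f.coeff m • ρ.Phi v w m := rfl

lemma QRep.Phi_eq_walkMap (ρ : QRep R Q) (hρ : ρ.Consistent) {v w : V} (p : Q.Walk v w) :
    ρ.Phi v w (Q.wlabel p) = ρ.walkMap p := by
  have h : ∃ q : Q.Walk v w, Q.wlabel q = Q.wlabel p := ⟨p, rfl⟩
  rw [QRep.Phi]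
  simp only [h, dif_pos]
  exact hρ v w _ p h.choose_spec

lemma QRep.Phi_mul (ρ : QRep R Q) (hρ : ρ.Consistent) {u u' v' w : V}
    {ma mg mb : FreeMonoid X}
    (ha : (v', w) ∈ Q.sigW ma) (hg : (u', v') ∈ Q.sigW mg) (hb : (u, u') ∈ Q.sigW mb) :
    ρ.Phi u w (ma * mg * mb) =
      (ρ.Phi v' w ma).comp ((ρ.Phi u' v' mg).comp (ρ.Phi u u' mb)) := by
  obtain ⟨pa, hpa⟩ := ha
  obtain ⟨pg, hpg⟩ := hg
  obtain ⟨pb, hpb⟩ := hb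
  have hlab : Q.wlabel ((pa.wcomp pg).wcomp pb) = ma * mg * mb := by
    rw [LQuiver.wlabel_wcomp, LQuiver.wlabel_wcomp, hpa, hpg, hpb]
  rw [← hlab, QRep.Phi_eq_walkMap ρ hρ, QRep.walkMap_wcomp, QRep.walkMap_wcomp,
    ← hpa, ← hpg, ← hpb, QRep.Phi_eq_walkMap ρ hρ, QRep.Phi_eq_walkMap ρ hρ,
    QRep.Phi_eq_walkMap ρ hρ, LinearMap.comp_assoc]

/-- `real` as a linear map in the polynomial. -/
noncomputable def QRep.realHom (ρ : QRep R Q) (v w : V) :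
    MonoidAlgebra R (FreeMonoid X) →ₗ[R] (ρ.M v →ₗ[R] ρ.M w) where
  toFun f := f.coeff.sum fun m c => c • ρ.Phi v w m
  map_add' f g := Finsupp.sum_add_index' (fun m => zero_smul R _) fun m c d => add_smul c d _
  map_smul' c f := by
    simp only [RingHom.id_apply, MonoidAlgebra.coeff_smul]
    rw [Finsupp.sum_smul_index' (fun m => zero_smul R (ρ.Phi v w m)), Finsupp.smul_sum]
    exact Finsupp.sum_congr fun m _ => by rw [smul_eq_mul, mul_smul]

lemma QRep.real_eq_hom (ρ : QRep R Q) (v w : V) (f : MonoidAlgebra R (FreeMonoid X)) :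
    ρ.real v w f = ρ.realHom v w f := rfl

lemma QRep.real_single (ρ : QRep R Q) (v w : V) (m : FreeMonoid X) (c : R) :
    ρ.real v w (MonoidAlgebra.single m c) = c • ρ.Phi v w m := by
  rw [QRep.real_eq_hom]
  show (Finsupp.single m c).sum (fun m c => c • ρ.Phi v w m) = c • ρ.Phi v w m
  exact Finsupp.sum_single_index (zero_smul R _)

lemma QRep.real_mul3 (ρ : QRep R Q) (hρ : ρ.Consistent) {u u' v' w : V}
    (a g b : MonoidAlgebra R (FreeMonoid X))
    (ha : (v', w) ∈ Q.sig a) (hg : (u', v') ∈ Q.sig g) (hb : (u, u') ∈ Q.sig b) :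
    ρ.real u w (a * g * b) =
      (ρ.real v' w a).comp ((ρ.real u' v' g).comp (ρ.real u u' b)) := by
  have hexp : a * g * b = ∑ ma ∈ a.coeff.support, ∑ mg ∈ g.coeff.support, ∑ mb ∈ b.coeff.support,
      MonoidAlgebra.single (ma * mg * mb) (a.coeff ma * g.coeff mg * b.coeff mb) := by
    conv_lhs => rw [← MonoidAlgebra.sum_coeff_single a, ← MonoidAlgebra.sum_coeff_single g, ← MonoidAlgebra.sum_coeff_single b]
    rw [Finsupp.sum, Finsupp.sum, Finsupp.sum]
    simp only [Finset.sum_mul, Finset.mul_sum, MonoidAlgebra.single_mul_single]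
    rw [Finset.sum_comm]
    conv_lhs => enter [2, mg]; rw [Finset.sum_comm]
    rw [Finset.sum_comm]
  have haW : ∀ ma ∈ a.coeff.support, (v', w) ∈ Q.sigW ma := fun ma hma =>
    Set.mem_iInter₂.mp ha ma hma
  have hgW : ∀ mg ∈ g.coeff.support, (u', v') ∈ Q.sigW mg := fun mg hmg =>
    Set.mem_iInter₂.mp hg mg hmg
  have hbW : ∀ mb ∈ b.coeff.support, (u, u') ∈ Q.sigW mb := fun mb hmb =>
    Set.mem_iInter₂.mp hb mb hmb
  have key : ∀ ma ∈ a.coeff.support, ∀ mg ∈ g.coeff.support, ∀ mb ∈ b.coeff.support,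
      ρ.Phi u w (ma * mg * mb) =
        (ρ.Phi v' w ma).comp ((ρ.Phi u' v' mg).comp (ρ.Phi u u' mb)) :=
    fun ma hma mg hmg mb hmb =>
      ρ.Phi_mul hρ (haW ma hma) (hgW mg hmg) (hbW mb hmb)
  rw [QRep.real_eq_hom, hexp, map_sum]
  simp only [map_sum, ← QRep.real_eq_hom, QRep.real_single]
  have step : (∑ ma ∈ a.coeff.support, ∑ mg ∈ g.coeff.support, ∑ mb ∈ b.coeff.support,
      (a.coeff ma * g.coeff mg * b.coeff mb) • ρ.Phi u w (ma * mg * mb)) =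
      ∑ ma ∈ a.coeff.support, ∑ mg ∈ g.coeff.support, ∑ mb ∈ b.coeff.support,
      (a.coeff ma * g.coeff mg * b.coeff mb) •
        ((ρ.Phi v' w ma).comp ((ρ.Phi u' v' mg).comp (ρ.Phi u u' mb))) :=
    Finset.sum_congr rfl fun ma hma => Finset.sum_congr rfl fun mg hmg =>
      Finset.sum_congr rfl fun mb hmb => by rw [key ma hma mg hmg mb hmb]
  rw [step, QRep.real_eq, QRep.real_eq, QRep.real_eq]
  ext x
  simp only [LinearMap.sum_apply, LinearMap.smul_apply, LinearMap.coe_comp,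
    Function.comp_apply, map_sum, map_smul, Finset.smul_sum, mul_smul]
  conv_rhs => rw [Finset.sum_comm]
  conv_rhs => enter [2, mg]; rw [Finset.sum_comm]
  conv_rhs => rw [Finset.sum_comm]
  refine Finset.sum_congr rfl fun ma _ => Finset.sum_congr rfl fun mg _ =>
    Finset.sum_congr rfl fun mb _ => ?_
  rw [smul_smul, smul_smul, smul_smul, smul_smul]
  congr 1
  ring

end Aux

/-- all realizations of a `Q`-consequence of `F` vanish whenever all
realizations of all elements of `F` vanish. -/
theorem realizations_of_qConsequence {V E X R : Type*} [CommRing R] (Q : LQuiver V E X)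
    (F : Set (MonoidAlgebra R (FreeMonoid X))) (f : MonoidAlgebra R (FreeMonoid X))
    (hf : Q.QConsequence F f) :
    ∀ ρ : QRep R Q, ρ.Consistent →
      (∀ g ∈ F, ∀ uv ∈ Q.sig g, ρ.real uv.1 uv.2 g = 0) →
      ∀ uv ∈ Q.sig f, ρ.real uv.1 uv.2 f = 0 := by
  intro ρ hcons hF uv huv
  obtain ⟨hcompat, n, g, a, b, hgF, hfeq, hsig⟩ := hf
  have hsum : ρ.real uv.1 uv.2 f = ∑ i, ρ.real uv.1 uv.2 (a i * g i * b i) := by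
    rw [QRep.real_eq_hom, hfeq, map_sum]
    exact Finset.sum_congr rfl fun i _ => (QRep.real_eq_hom ρ uv.1 uv.2 _).symm
  rw [hsum]
  refine Finset.sum_eq_zero fun i _ => ?_
  obtain ⟨ui, vi, hbi, hgi, hai⟩ := hsig uv huv i
  rw [ρ.real_mul3 hcons (a i) (g i) (b i) hai hgi hbi,
    hF (g i) (hgF i) (ui, vi) hgi]
  simp
end

section
/- Assume all edges of the labelled quiver Q have unique labels (the labelling l : E → X is injective). Fix a monomial order ≤ on ⟨X⟩, let f, g ∈ K⟨X⟩ be polynomials compatible with Q with g ∉ K (g is not a constant), and suppose f is rewritten in one step to h = f + λ·a·g·b with a·LM(g)·b ∈ supp(f) for monomials a, b ∈ ⟨X⟩ and λ ∈ K. If h ∉ K, then σ(h) = σ(f). -/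
open scoped BigOperators

universe u₁ u₂ u₃ u₄ u₅

namespace LQuiver
section Aux

variable {V E X : Type*} (Q : LQuiver V E X)

/-- Concatenation of walks. -/
def Wconcat {u w : V} (p : Q.Walk u w) : ∀ {v : V}, Q.Walk w v → Q.Walk u v
  | _, .nil _ => p
  | _, .cons e q => .cons e (Wconcat p q)

lemma wlabel_nil (v : V) : Q.wlabel (.nil v) = 1 := by simp [LQuiver.wlabel]

lemma wlabel_cons {u : V} (e : E) (p : Q.Walk u (Q.src e)) :
    Q.wlabel (.cons e p) = FreeMonoid.of (Q.lab e) * Q.wlabel p := by simp [LQuiver.wlabel]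

lemma wlabel_Wconcat {u w : V} (p : Q.Walk u w) : ∀ {v : V} (q : Q.Walk w v),
    Q.wlabel (Q.Wconcat p q) = Q.wlabel q * Q.wlabel p
  | _, .nil _ => by simp only [Wconcat, wlabel_nil, one_mul]
  | _, .cons e q => by
      simp only [Wconcat, wlabel_cons, wlabel_Wconcat p q, mul_assoc]

lemma eq_of_wlabel_eq_one : ∀ {u v : V} (p : Q.Walk u v), Q.wlabel p = 1 → u = v
  | _, _, .nil _, _ => rfl
  | _, _, .cons e p, h => by
      exfalso
      have := congrArg FreeMonoid.toList h
      rw [wlabel_cons] at this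
      simp at this

lemma wsplit : ∀ {u v : V} (r : Q.Walk u v) (m₂ m₁ : FreeMonoid X),
    Q.wlabel r = m₂ * m₁ →
    ∃ (w : V) (p : Q.Walk u w) (q : Q.Walk w v), Q.wlabel p = m₁ ∧ Q.wlabel q = m₂ := by
  intro u v r
  induction r with
  | nil =>
      intro m₂ m₁ hl
      rw [wlabel_nil] at hl
      have h1 : m₂ = 1 ∧ m₁ = 1 := by
        have := congrArg FreeMonoid.toList hl.symm
        simp only [FreeMonoid.toList_mul, FreeMonoid.toList_one, List.append_eq_nil_iff] at this
        exact ⟨FreeMonoid.toList.injective (by simp [this.1]),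
          FreeMonoid.toList.injective (by simp [this.2])⟩
      exact ⟨_, .nil _, .nil _, by rw [wlabel_nil, h1.2], by rw [wlabel_nil, h1.1]⟩
  | cons e r ih =>
      intro m₂ m₁ hl
      rcases eq_or_ne m₂ 1 with rfl | hm2
      · exact ⟨_, .cons e r, .nil _, by rw [one_mul] at hl; exact hl, wlabel_nil Q _⟩
      · obtain ⟨x, l, hx⟩ : ∃ x l, FreeMonoid.toList m₂ = x :: l := by
          cases hml : FreeMonoid.toList m₂ with
          | nil => exact absurd (FreeMonoid.toList.injective (by simp [hml])) hm2
          | cons x l => exact ⟨x, l, rfl⟩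
        have hl' := congrArg FreeMonoid.toList hl
        rw [wlabel_cons] at hl'
        simp only [FreeMonoid.toList_mul, FreeMonoid.toList_of, hx,
          List.cons_append, List.singleton_append, List.cons.injEq] at hl'
        obtain ⟨hxe, hrest⟩ := hl'
        have hr : Q.wlabel r = FreeMonoid.ofList l * m₁ :=
          FreeMonoid.toList.injective (by simpa using hrest)
        obtain ⟨w, p, q, hp, hq⟩ := ih _ _ hr
        refine ⟨w, p, .cons e q, hp, ?_⟩
        have hm2' : m₂ = FreeMonoid.of (Q.lab e) * FreeMonoid.ofList l :=
          FreeMonoid.toList.injective (by simp [hx, hxe])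
        rw [wlabel_cons, hq, hm2']

lemma wlabel_det (hinj : Function.Injective Q.lab) :
    ∀ {u₁ v₁ : V} (p : Q.Walk u₁ v₁) {u₂ v₂ : V} (q : Q.Walk u₂ v₂),
      Q.wlabel p = Q.wlabel q → Q.wlabel p ≠ 1 → u₁ = u₂ ∧ v₁ = v₂ := by
  intro u₁ v₁ p
  induction p with
  | nil => intro u₂ v₂ q h hne; exact absurd (wlabel_nil Q _) hne
  | cons e p ih =>
      intro u₂ v₂ q h hne
      cases q with
      | nil =>
          exfalso; rw [h, wlabel_nil] at hne; exact hne rfl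
      | cons e' q =>
          have h' := congrArg FreeMonoid.toList h
          rw [wlabel_cons, wlabel_cons] at h'
          simp only [FreeMonoid.toList_mul, FreeMonoid.toList_of, List.cons_append,
            List.singleton_append, List.cons.injEq] at h'
          obtain ⟨he, hrest⟩ := h'
          have hee : e = e' := hinj he
          subst hee
          have hlab : Q.wlabel p = Q.wlabel q := FreeMonoid.toList.injective hrest
          rcases eq_or_ne (Q.wlabel p) 1 with h1 | h1
          · have e1 := Q.eq_of_wlabel_eq_one p h1
            have e2 := Q.eq_of_wlabel_eq_one q (hlab ▸ h1)
            exact ⟨e1.trans e2.symm, rfl⟩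
          · exact ⟨(ih q hlab h1).1, rfl⟩

lemma sigW_subsingleton (hinj : Function.Injective Q.lab) {m : FreeMonoid X} (hm : m ≠ 1) :
    (Q.sigW m).Subsingleton := by
  rintro ⟨u₁, v₁⟩ ⟨p, hp⟩ ⟨u₂, v₂⟩ ⟨q, hq⟩
  have := Q.wlabel_det hinj p q (by rw [hp, hq]) (by rw [hp]; exact hm)
  simpa only [Prod.mk.injEq] using this

lemma mem_sigW_mul {u v : V} {m₂ m₁ : FreeMonoid X} :
    (u, v) ∈ Q.sigW (m₂ * m₁) ↔ ∃ w, (u, w) ∈ Q.sigW m₁ ∧ (w, v) ∈ Q.sigW m₂ := by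
  constructor
  · rintro ⟨r, hr⟩
    obtain ⟨w, p, q, hp, hq⟩ := Q.wsplit r m₂ m₁ hr
    exact ⟨w, ⟨p, hp⟩, ⟨q, hq⟩⟩
  · rintro ⟨w, ⟨p, hp⟩, ⟨q, hq⟩⟩
    exact ⟨Q.Wconcat p q, by rw [Q.wlabel_Wconcat, hp, hq]⟩

end Aux
end LQuiver

lemma one_le_mo {X : Type*} (ord : LinearOrder (FreeMonoid X)) (hord : IsMonomialOrder ord)
    (m : FreeMonoid X) : ord.le 1 m := by
  by_contra hle
  have hlt1 : ord.le m 1 := (ord.le_total m 1).resolve_right hle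
  have hne : m ≠ 1 := fun hm => hle (hm ▸ ord.le_refl 1)
  have key : ∀ n : ℕ, ord.lt (m ^ (n + 1)) (m ^ n) := by
    intro n
    have hle' : ord.le (m ^ n * m * 1) (m ^ n * 1 * 1) := hord.2 (m ^ n) 1 m 1 hlt1
    simp only [mul_one] at hle'
    have hne' : m ^ n * m ≠ m ^ n := fun hc =>
      hne (mul_left_cancel (a := m ^ n) (by rw [hc, mul_one]))
    rw [pow_succ]
    exact (ord.lt_iff_le_not_ge _ _).2 ⟨hle', fun hge => hne' (ord.le_antisymm _ _ hle' hge)⟩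
  obtain ⟨x, ⟨n, rfl⟩, hmin⟩ := hord.1.has_min (Set.range fun n => m ^ n) ⟨m ^ 0, 0, rfl⟩
  exact hmin (m ^ (n + 1)) ⟨n + 1, rfl⟩ (key n)

open scoped Pointwise

/-- with unique labels, one reduction step of a compatible polynomial by a
compatible non-constant polynomial does not change the signature unless the result is a
constant. -/
theorem reduction_step_preserves_sig {V E X K : Type*} [Field K] (Q : LQuiver V E X)
    (hinj : Function.Injective Q.lab)
    (ord : LinearOrder (FreeMonoid X)) (hord : IsMonomialOrder ord)
    (f g : MonoidAlgebra K (FreeMonoid X))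
    (hf : Q.Compatible f) (hgc : Q.Compatible g)
    (hgK : g ∉ Set.range (algebraMap K (MonoidAlgebra K (FreeMonoid X))))
    (h : MonoidAlgebra K (FreeMonoid X)) (lam : K) (a b : FreeMonoid X)
    (hdvd : a * LM ord g * b ∈ f.coeff.support)
    (hh : h = f + lam • (mono K a * g * mono K b))
    (hhK : h ∉ Set.range (algebraMap K (MonoidAlgebra K (FreeMonoid X)))) :
    Q.sig h = Q.sig f := by
  classical
  letI := ord
  have halg : ∀ (p : MonoidAlgebra K (FreeMonoid X)), p.coeff.support ⊆ {1} →
      p ∈ Set.range (algebraMap K (MonoidAlgebra K (FreeMonoid X))) := by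
    intro p hp
    refine ⟨p.coeff 1, ?_⟩
    apply MonoidAlgebra.coeff_injective
    conv_rhs => rw [Finsupp.support_subset_singleton.mp hp]
    simp [MonoidAlgebra.coe_algebraMap, MonoidAlgebra.coeff_single]
  have hg0 : g ≠ 0 := by
    intro h0
    exact hgK (halg g (by simp [h0]))
  set L := LM ord g with hL
  have hLdef : L = g.coeff.support.max' (Finsupp.support_nonempty_iff.mpr (mt MonoidAlgebra.coeff_eq_zero.mp hg0)) := by
    rw [hL]; unfold LM; rw [dif_neg hg0]
  have hLmem : L ∈ g.coeff.support := by rw [hLdef]; exact g.coeff.support.max'_mem _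
  have hLmax : ∀ m ∈ g.coeff.support, ord.le m L := by
    intro m hm; rw [hLdef]; exact g.coeff.support.le_max' m hm
  have hL1 : L ≠ 1 := by
    intro hc
    apply hgK
    apply halg
    intro m hm
    have h1 : ord.le m (1 : FreeMonoid X) := hc ▸ hLmax m hm
    have h2 : ord.le (1 : FreeMonoid X) m := one_le_mo ord hord m
    simpa using ord.le_antisymm _ _ h1 h2
  -- membership facts
  obtain ⟨⟨u, v⟩, huv⟩ := hf
  have hmemf : ∀ m ∈ f.coeff.support, (u, v) ∈ Q.sigW m := by
    intro m hm
    exact Set.mem_iInter₂.mp huv m hm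
  obtain ⟨⟨u₀, v₀⟩, hg00⟩ := hgc
  have hmemg : ∀ m ∈ g.coeff.support, (u₀, v₀) ∈ Q.sigW m := by
    intro m hm
    exact Set.mem_iInter₂.mp hg00 m hm
  -- decompose the walk for a * L * b
  have hfL : (u, v) ∈ Q.sigW (a * L * b) := hmemf _ hdvd
  obtain ⟨w, hwb, hwaL⟩ := (Q.mem_sigW_mul (m₂ := a * L) (m₁ := b)).1 hfL
  obtain ⟨w', hwL, hwa⟩ := (Q.mem_sigW_mul (m₂ := a) (m₁ := L)).1 hwaL
  have hg0L : (u₀, v₀) ∈ Q.sigW L := hmemg _ hLmem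
  have heq : (w, w') = (u₀, v₀) := Q.sigW_subsingleton hinj hL1 hwL hg0L
  have hmemg' : ∀ m ∈ g.coeff.support, (w, w') ∈ Q.sigW m := by
    intro m hm; rw [heq]; exact hmemg m hm
  have hkey : ∀ m ∈ g.coeff.support, (u, v) ∈ Q.sigW (a * m * b) := by
    intro m hm
    exact (Q.mem_sigW_mul (m₂ := a * m) (m₁ := b)).2
      ⟨w, hwb, (Q.mem_sigW_mul (m₂ := a) (m₁ := m)).2 ⟨w', hmemg' m hm, hwa⟩⟩
  -- support of h
  have hsupp : ∀ n ∈ h.coeff.support, n ∈ f.coeff.support ∨ ∃ m ∈ g.coeff.support, n = a * m * b := by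
    intro n hn
    by_cases hfn : n ∈ f.coeff.support
    · exact Or.inl hfn
    · right
      have hfn0 : f.coeff n = 0 := Finsupp.notMem_support_iff.mp hfn
      have hhn : h.coeff n ≠ 0 := Finsupp.mem_support_iff.mp hn
      have hpn : (lam • (mono K a * g * mono K b)).coeff n ≠ 0 := by
        intro hc
        apply hhn
        rw [hh, MonoidAlgebra.coeff_add, Finsupp.add_apply, hfn0, hc, add_zero]
      have hnsm : n ∈ (lam • (mono K a * g * mono K b)).coeff.support :=
        Finsupp.mem_support_iff.mpr hpn
      have hnp : n ∈ (mono K a * g * mono K b).coeff.support := by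
        rw [MonoidAlgebra.coeff_smul] at hnsm; exact Finsupp.support_smul hnsm
      have h2 : n ∈ (mono K a * g).coeff.support * (mono K b).coeff.support :=
        MonoidAlgebra.support_coeff_mul_subset _ _ hnp
      rw [Finset.mem_mul] at h2
      obtain ⟨c, hc, d, hd, hcd⟩ := h2
      have hdb : d = b := by
        have := Finsupp.support_single_subset hd
        simpa using this
      have hc2 : c ∈ (mono K a).coeff.support * g.coeff.support :=
        MonoidAlgebra.support_coeff_mul_subset _ _ hc
      rw [Finset.mem_mul] at hc2
      obtain ⟨a', ha', m, hm, ham⟩ := hc2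
      have haa : a' = a := by
        have := Finsupp.support_single_subset ha'
        simpa using this
      exact ⟨m, hm, by rw [← hcd, ← ham, haa, hdb]⟩
  -- (u,v) ∈ sig h
  have hUVh : (u, v) ∈ Q.sig h := by
    apply Set.mem_iInter₂.mpr
    intro n hn
    rcases hsupp n hn with hnf | ⟨m, hm, rfl⟩
    · exact hmemf n hnf
    · exact hkey m hm
  -- pick a non-unit monomial of h
  obtain ⟨n₀, hn₀, hn₀1⟩ : ∃ n ∈ h.coeff.support, n ≠ 1 := by
    by_contra hc
    push_neg at hc
    exact hhK (halg h (fun n hn => Finset.mem_singleton.mpr (hc n hn)))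
  have habL : a * L * b ≠ 1 := by
    intro hc
    apply hL1
    have := congrArg FreeMonoid.toList hc
    simp only [FreeMonoid.toList_mul, FreeMonoid.toList_one, List.append_eq_nil_iff] at this
    exact FreeMonoid.toList.injective (by simp [this.1.2])
  have hsigh : Q.sig h = {(u, v)} := by
    apply Set.eq_singleton_iff_unique_mem.mpr
    refine ⟨hUVh, ?_⟩
    intro x hx
    have hx0 : x ∈ Q.sigW n₀ := Set.mem_iInter₂.mp hx n₀ hn₀
    have huv0 : (u, v) ∈ Q.sigW n₀ := Set.mem_iInter₂.mp hUVh n₀ hn₀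
    exact Q.sigW_subsingleton hinj hn₀1 hx0 huv0
  have hsigf : Q.sig f = {(u, v)} := by
    apply Set.eq_singleton_iff_unique_mem.mpr
    refine ⟨huv, ?_⟩
    intro x hx
    have hx0 : x ∈ Q.sigW (a * L * b) := Set.mem_iInter₂.mp hx _ hdvd
    exact Q.sigW_subsingleton hinj habL hx0 hfL
  rw [hsigh, hsigf]
end
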